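/- On Ω_β the vector field (F₁, F₂) is Hamiltonian with Hamiltonian H: for all (θ,W) ∈ Ω_β, F₁(θ,W) = ∂H/∂W(θ,W) and F₂(θ,W) = −∂H/∂θ(θ,W). -/

import Mathlib

noncomputable section

open Real Set

/-- θ_β = arctan(1/√β). -/
def thetaB (β : ℝ) : ℝ := Real.arctan (1 / Real.sqrt β)

/-- The phase space Ω_β. -/
def OmegaB (β : ℝ) : Set (ℝ × ℝ) :=
  {p | 0 < p.1 ∧ p.1 < Real.pi / 2 ∧ p ≠ (thetaB β, 0)}

/-- D(θ,W) = (d²/β)(√β sin θ − cos θ)² + W². -/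
def Dfun (d β θ W : ℝ) : ℝ :=
  d ^ 2 / β * (Real.sqrt β * Real.sin θ - Real.cos θ) ^ 2 + W ^ 2

/-- F₁(θ,W) = α √β W / D(θ,W)^{3/2}. -/
def F1 (α d β θ W : ℝ) : ℝ :=
  α * Real.sqrt β * W / Dfun d β θ W ^ ((3 : ℝ) / 2)

/-- F₂(θ,W). -/
def F2 (α d β θ W : ℝ) : ℝ :=
  (β ^ ((3 : ℝ) / 2) * Real.sin θ - Real.cos θ) / (d * Real.sin θ * Real.cos θ) -
    α * d ^ 2 * (Real.sin θ + Real.sqrt β * Real.cos θ) *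
        (Real.sqrt β * Real.sin θ - Real.cos θ) /
      (Real.sqrt β * Dfun d β θ W ^ ((3 : ℝ) / 2))

/-- The Hamiltonian H(θ,W). -/
def Ham (α d β θ W : ℝ) : ℝ :=
  1 / (2 * d) *
      Real.log (((1 - Real.sin θ) ^ (β ^ ((3 : ℝ) / 2)) * (1 - Real.cos θ)) /
        ((1 + Real.sin θ) ^ (β ^ ((3 : ℝ) / 2)) * (1 + Real.cos θ))) -
    α * Real.sqrt β / Dfun d β θ W ^ ((1 : ℝ) / 2)

set_option maxHeartbeats 2000000 in
/-- The vector field (F₁, F₂) is Hamiltonian on Ω_β with Hamiltonian H: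
F₁ = ∂H/∂W and F₂ = −∂H/∂θ. -/
theorem hamiltonian_structure_same_sign
    (α d β : ℝ) (hα : 0 < α) (hd : 0 < d) (hβ : 1 ≤ β)
    (θ W : ℝ) (hmem : (θ, W) ∈ OmegaB β) :
    HasDerivAt (fun w => Ham α d β θ w) (F1 α d β θ W) W ∧
    HasDerivAt (fun s => Ham α d β s W) (-F2 α d β θ W) θ := by
  obtain ⟨hθ0, hθ2, hnep⟩ := hmem
  simp only at hθ0 hθ2
  have hβ0 : (0:ℝ) < β := by linarith
  set sb := Real.sqrt β with hsb
  have hsb0 : 0 < sb := Real.sqrt_pos.mpr hβ0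
  have hsb2 : sb ^ 2 = β := Real.sq_sqrt hβ0.le
  set b := β ^ ((3:ℝ)/2) with hb
  have hc : 0 < Real.cos θ := Real.cos_pos_of_mem_Ioo ⟨by linarith [Real.pi_pos], hθ2⟩
  have hs : 0 < Real.sin θ := Real.sin_pos_of_pos_of_lt_pi hθ0 (by linarith [Real.pi_pos])
  -- nondegeneracy and positivity of D
  have hkey : sb * Real.sin θ - Real.cos θ ≠ 0 ∨ W ≠ 0 := by
    by_contra h
    push_neg at h
    obtain ⟨h1, h2⟩ := h
    apply hnep
    have htan : Real.tan θ = 1 / sb := by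
      rw [Real.tan_eq_sin_div_cos]
      field_simp at h1 ⊢
      linarith
    have hth : θ = thetaB β := by
      rw [thetaB, ← hsb, ← htan, Real.arctan_tan (by linarith [Real.pi_pos]) hθ2]
    rw [hth, h2]
  have hD : 0 < Dfun d β θ W := by
    rcases hkey with h | h
    · have h1 : 0 < (sb * Real.sin θ - Real.cos θ) ^ 2 :=
        lt_of_le_of_ne (sq_nonneg _) (Ne.symm (pow_ne_zero 2 h))
      have h2 : 0 < d ^ 2 / β := by positivity
      simp only [Dfun, ← hsb]
      nlinarith [sq_nonneg W]
    · have h1 : 0 < W ^ 2 := lt_of_le_of_ne (sq_nonneg _) (Ne.symm (pow_ne_zero 2 h))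
      simp only [Dfun]
      positivity
  set D := Dfun d β θ W with hDdef
  have hDhalf : 0 < D ^ ((1:ℝ)/2) := Real.rpow_pos_of_pos hD _
  have h32 : D ^ ((3:ℝ)/2) = D ^ ((1:ℝ)/2) * D := by
    rw [show (3:ℝ)/2 = 1/2 + 1 by norm_num, Real.rpow_add hD, Real.rpow_one]
  have hneg : D ^ ((1:ℝ)/2 - 1) = (D ^ ((1:ℝ)/2))⁻¹ := by
    rw [show (1:ℝ)/2 - 1 = -(1/2) by norm_num, Real.rpow_neg hD.le]
  have hsq : (D ^ ((1:ℝ)/2)) ^ 2 = D := by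
    rw [sq, ← Real.rpow_add hD]; norm_num
  have hs1 : Real.sin θ < 1 := by
    rcases lt_or_eq_of_le (Real.sin_le_one θ) with h | h
    · exact h
    · exfalso; nlinarith [Real.sin_sq_add_cos_sq θ]
  have hc1 : Real.cos θ < 1 := by
    rcases lt_or_eq_of_le (Real.cos_le_one θ) with h | h
    · exact h
    · exfalso; nlinarith [Real.sin_sq_add_cos_sq θ]
  have p1 : (0:ℝ) < 1 - Real.sin θ := by linarith
  have p2 : (0:ℝ) < 1 + Real.sin θ := by linarith
  have p3 : (0:ℝ) < 1 - Real.cos θ := by linarith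
  have p4 : (0:ℝ) < 1 + Real.cos θ := by linarith
  have pyth := Real.sin_sq_add_cos_sq θ
  constructor
  -- Part 1: derivative in W
  · have hDW : HasDerivAt (fun w => Dfun d β θ w) (2 * W) W := by
      have h := (hasDerivAt_pow 2 W).const_add
        (d ^ 2 / β * (sb * Real.sin θ - Real.cos θ) ^ 2)
      simpa [Dfun, ← hsb] using h
    have hq : HasDerivAt (fun w => Dfun d β θ w ^ ((1:ℝ)/2))
        (2 * W * ((1:ℝ)/2) * D ^ ((1:ℝ)/2 - 1)) W :=
      hDW.rpow_const (Or.inl hD.ne')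
    have hdiv := (hasDerivAt_const W (α * sb)).div hq (by rw [← hDdef]; exact hDhalf.ne')
    have hfin := hdiv.const_sub (1 / (2 * d) *
        Real.log (((1 - Real.sin θ) ^ (β ^ ((3 : ℝ) / 2)) * (1 - Real.cos θ)) /
          ((1 + Real.sin θ) ^ (β ^ ((3 : ℝ) / 2)) * (1 + Real.cos θ))))
    have heq : -((0 * Dfun d β θ W ^ ((1:ℝ)/2) -
        α * sb * (2 * W * ((1:ℝ)/2) * D ^ ((1:ℝ)/2 - 1))) /
        (Dfun d β θ W ^ ((1:ℝ)/2)) ^ 2) = F1 α d β θ W := by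
      rw [F1, ← hsb, ← hDdef, h32, hneg, hsq]
      field_simp
      ring
    rw [← heq]
    exact hfin
  -- Part 2: derivative in θ
  · have heven : (fun s => Ham α d β s W) =ᶠ[nhds θ]
        (fun s => 1 / (2 * d) *
          (β ^ ((3:ℝ)/2) * (Real.log (1 - Real.sin s) - Real.log (1 + Real.sin s)) +
            (Real.log (1 - Real.cos s) - Real.log (1 + Real.cos s))) -
          α * Real.sqrt β / Dfun d β s W ^ ((1 : ℝ) / 2)) := by
      filter_upwards [Ioo_mem_nhds hθ0 hθ2] with s hsmem
      obtain ⟨h0, h2⟩ := hsmem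
      have hc' : 0 < Real.cos s := Real.cos_pos_of_mem_Ioo ⟨by linarith [Real.pi_pos], h2⟩
      have hs' : 0 < Real.sin s := Real.sin_pos_of_pos_of_lt_pi h0 (by linarith [Real.pi_pos])
      have hs1' : Real.sin s < 1 := by
        rcases lt_or_eq_of_le (Real.sin_le_one s) with h | h
        · exact h
        · exfalso; nlinarith [Real.sin_sq_add_cos_sq s]
      have hc1' : Real.cos s < 1 := by
        rcases lt_or_eq_of_le (Real.cos_le_one s) with h | h
        · exact h
        · exfalso; nlinarith [Real.sin_sq_add_cos_sq s]
      have q1 : (0:ℝ) < 1 - Real.sin s := by linarith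
      have q2 : (0:ℝ) < 1 + Real.sin s := by linarith
      have q3 : (0:ℝ) < 1 - Real.cos s := by linarith
      have q4 : (0:ℝ) < 1 + Real.cos s := by linarith
      simp only [Ham]
      rw [Real.log_div (by positivity) (by positivity),
        Real.log_mul (by positivity) q3.ne', Real.log_mul (by positivity) q4.ne',
        Real.log_rpow q1, Real.log_rpow q2]
      ring
    apply HasDerivAt.congr_of_eventuallyEq _ heven
    -- derivative of the split form
    have l1 := (((Real.hasDerivAt_sin θ).const_sub 1).log p1.ne')
    have l2 := (((Real.hasDerivAt_sin θ).const_add 1).log p2.ne')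
    have l3 := (((Real.hasDerivAt_cos θ).const_sub 1).log p3.ne')
    have l4 := (((Real.hasDerivAt_cos θ).const_add 1).log p4.ne')
    have llog := (((l1.sub l2).const_mul b).add (l3.sub l4)).const_mul (1 / (2 * d))
    have hinner := ((Real.hasDerivAt_sin θ).const_mul sb).sub (Real.hasDerivAt_cos θ)
    have hsqd := hinner.pow 2
    have hDθ : HasDerivAt (fun s => Dfun d β s W)
        (d ^ 2 / β * (2 * (sb * Real.sin θ - Real.cos θ) ^ 1 *
          (sb * Real.cos θ - -Real.sin θ))) θ := by
      have h := (hsqd.const_mul (d ^ 2 / β)).add_const (W ^ 2)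
      simpa [Dfun, ← hsb] using h
    have hqθ := hDθ.rpow_const (p := (1:ℝ)/2) (Or.inl hD.ne')
    have hdivθ := (hasDerivAt_const θ (α * sb)).div hqθ (by rw [← hDdef]; exact hDhalf.ne')
    have hfin := llog.sub hdivθ
    convert hfin using 1
    · rfl
    have hA : -Real.cos θ / (1 - Real.sin θ) - Real.cos θ / (1 + Real.sin θ)
        = -2 / Real.cos θ := by
      field_simp
      linear_combination (-2 : ℝ) * pyth
    have hB : - -Real.sin θ / (1 - Real.cos θ) - -Real.sin θ / (1 + Real.cos θ)
        = 2 / Real.sin θ := by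
      field_simp
      linear_combination 2 * pyth
    rw [hA, hB, F2, ← hDdef, ← hsb, ← hb, h32, hneg, hsq, ← hsb2]
    field_simp
    ring
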